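/- Let (u_{ij})_{1 ≤ i,j ≤ n} be a magic unitary in a unital C*-algebra A, let k ≤ n, let π be a non-crossing partition of {1,…,k}, and let j_1,…,j_k ∈ {1,…,n}. Then Σ over all (i_1,…,i_k) ∈ {1,…,n}^k with π ≤ ker i of u_{i_1 j_1} ⋯ u_{i_k j_k} equals 1 if π ≤ ker j, and equals 0 otherwise. -/

import Mathlib

open Classical

private lemma my_ortho {A : Type*} [NormedRing A] [StarRing A] [CStarRing A]
    [CompleteSpace A] [NormedAlgebra ℂ A] [StarModule ℂ A]
    {n : ℕ} (v : Fin n → A) (hv : ∀ i, star (v i) = v i ∧ v i * v i = v i)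
    (hsum : ∑ i, v i = 1) {a b : Fin n} (hab : a ≠ b) : v a * v b = 0 := by
  letI : CStarAlgebra A := {}
  letI := CStarAlgebra.spectralOrder A
  haveI := CStarAlgebra.spectralOrderedRing A
  have hterm : ∀ i, v a * (v i * v a) = star (v i * v a) * (v i * v a) := by
    intro i
    rw [star_mul, (hv i).1, (hv a).1, mul_assoc]
    rw [← mul_assoc (v i), (hv i).2]
  have key : ∑ i, v a * (v i * v a) = v a := by
    calc ∑ i, v a * (v i * v a) = v a * ((∑ i, v i) * v a) := by
          rw [Finset.sum_mul, Finset.mul_sum]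
      _ = v a := by rw [hsum, one_mul, (hv a).2]
  have h0 : ∑ i ∈ Finset.univ.erase a, v a * (v i * v a) = 0 := by
    have h := Finset.add_sum_erase Finset.univ (fun i => v a * (v i * v a)) (Finset.mem_univ a)
    rw [key] at h
    have ha : v a * (v a * v a) = v a := by rw [(hv a).2, (hv a).2]
    rw [ha] at h
    exact add_eq_left.mp h
  have hb0 : v a * (v b * v a) = 0 := by
    refine (Finset.sum_eq_zero_iff_of_nonneg ?_).mp h0 b
      (Finset.mem_erase.mpr ⟨hab.symm, Finset.mem_univ b⟩)
    intro i _
    rw [hterm i]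
    exact star_mul_self_nonneg _
  rw [hterm b] at hb0
  have hba : v b * v a = 0 := (CStarRing.star_mul_self_eq_zero_iff _).mp hb0
  calc v a * v b = star (v b * v a) := by rw [star_mul, (hv a).1, (hv b).1]
    _ = 0 := by rw [hba, star_zero]

private lemma my_ofFn_insertNth {M : Type*} : ∀ {k : ℕ} (p : Fin (k+1)) (x : M) (g : Fin k → M),
    List.ofFn (p.insertNth (α := fun _ => M) x g)
      = (List.ofFn g).take p.val ++ x :: (List.ofFn g).drop p.val := by
  intro k
  induction k with
  | zero =>
    intro p x g
    have hp : p = 0 := Fin.fin_one_eq_zero p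
    subst hp
    simp [Fin.insertNth_zero']
  | succ k ih =>
    intro p x g
    rcases p.eq_zero_or_eq_succ with rfl | ⟨q, rfl⟩
    · simp [Fin.insertNth_zero']
    · have h0 : q.succ.insertNth (α := fun _ => M) x g 0 = g 0 := by
        have h : (0 : Fin (k+2)) = q.succ.succAbove 0 := by
          rw [Fin.succAbove_of_castSucc_lt]
          · rfl
          · exact q.succ_pos
        rw [h, Fin.insertNth_apply_succAbove]
      have htail : ∀ a : Fin (k+1), q.succ.insertNth (α := fun _ => M) x g a.succ
          = q.insertNth (α := fun _ => M) x (fun b => g b.succ) a := by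
        intro a
        rcases eq_or_ne a q with rfl | hne
        · rw [Fin.insertNth_apply_same, Fin.insertNth_apply_same]
        · obtain ⟨b, rfl⟩ := Fin.exists_succAbove_eq hne
          rw [Fin.insertNth_apply_succAbove, ← Fin.succ_succAbove_succ,
            Fin.insertNth_apply_succAbove]
      rw [List.ofFn_succ]
      simp only [h0, htail]
      rw [ih q x (fun b => g b.succ)]
      rw [List.ofFn_succ (f := g)]
      simp [Fin.val_succ, List.take_succ_cons, List.drop_succ_cons]

private lemma my_prod_insertNth {M : Type*} [Monoid M] {k : ℕ} (p : Fin (k+1)) (x : M)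
    (g : Fin k → M) :
    (List.ofFn (p.insertNth (α := fun _ => M) x g)).prod
      = ((List.ofFn g).take p.val).prod * (x * ((List.ofFn g).drop p.val).prod) := by
  rw [my_ofFn_insertNth, List.prod_append, List.prod_cons]

private lemma my_exists_nice {k : ℕ} (R : Fin (k+1) → Fin (k+1) → Prop)
    (hR : Equivalence R)
    (hnc : ¬ ∃ s₁ t₁ s₂ t₂ : Fin (k+1), s₁ < t₁ ∧ t₁ < s₂ ∧ s₂ < t₂ ∧
      R s₁ s₂ ∧ R t₁ t₂ ∧ ¬ R s₁ t₁) :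
    (∃ p, ∀ t, R p t → t = p) ∨ ∃ s q : Fin (k+1), (s : ℕ) + 1 = (q : ℕ) ∧ R s q := by
  by_contra hcon
  push_neg at hcon
  obtain ⟨h1, h2⟩ := hcon
  have h1' : ∀ p : Fin (k+1), ∃ t, R p t ∧ t ≠ p := by
    intro p
    obtain ⟨t, ht⟩ := h1 p
    exact ⟨t, ht.1, ht.2⟩
  have hex : ∃ m : ℕ, 0 < m ∧ ∃ a b : Fin (k+1), R a b ∧ (a : ℕ) + m = (b : ℕ) := by
    obtain ⟨t, hRt, ht⟩ := h1' 0
    have htv : (t : ℕ) ≠ 0 := fun h => ht (Fin.ext (by rw [h, Fin.val_zero]))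
    exact ⟨(t : ℕ), Nat.pos_of_ne_zero htv, 0, t, hRt, by simp⟩
  set m := Nat.find hex with hmdef
  obtain ⟨hm, a, b, hab, hsum⟩ := Nat.find_spec hex
  have hm1 : m ≠ 1 := by
    intro h
    exact h2 a b (by omega) hab
  have hm2 : 2 ≤ m := by omega
  have hbk : (b : ℕ) < k + 1 := b.isLt
  have hck : (a : ℕ) + 1 < k + 1 := by omega
  set c : Fin (k+1) := ⟨(a : ℕ) + 1, hck⟩ with hcdef
  have hcv : (c : ℕ) = (a : ℕ) + 1 := rfl
  have hac : ¬ R a c := h2 a c rfl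
  obtain ⟨d, hcd, hdc⟩ := h1' c
  rcases lt_trichotomy (d : ℕ) (a : ℕ) with hd | hd | hd
  · -- d < a < c < b : crossing (d, a, c, b)
    refine hnc ⟨d, a, c, b, ?_, ?_, ?_, hR.symm hcd, hab, ?_⟩
    · exact hd
    · show (a : ℕ) < (c : ℕ); omega
    · show (c : ℕ) < (b : ℕ); omega
    · intro hda
      exact hac (hR.trans (hR.symm hda) (hR.symm hcd))
  · have : d = a := Fin.ext hd
    subst this
    exact hac (hR.symm hcd)
  · rcases lt_trichotomy (d : ℕ) (b : ℕ) with hdb | hdb | hdb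
    · -- a < d < b, d ≠ c so c < d ; minimality contradiction
      have hne : (d : ℕ) ≠ (c : ℕ) := fun h => hdc (Fin.ext h)
      have hcdval : (c : ℕ) < (d : ℕ) := by
        have : (c : ℕ) = (a : ℕ) + 1 := rfl
        omega
      have hQ : 0 < (d : ℕ) - (c : ℕ) ∧ ∃ a' b' : Fin (k+1),
          R a' b' ∧ (a' : ℕ) + ((d : ℕ) - (c : ℕ)) = (b' : ℕ) :=
        ⟨by omega, c, d, hcd, by omega⟩
      have hlt : (d : ℕ) - (c : ℕ) < m := by
        have : (c : ℕ) = (a : ℕ) + 1 := rfl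
        omega
      exact Nat.find_min hex hlt hQ
    · have : d = b := Fin.ext hdb
      subst this
      exact hac (hR.trans hab (hR.symm hcd))
    · -- a < c < b < d : crossing (a, c, b, d)
      refine hnc ⟨a, c, b, d, ?_, ?_, ?_, hab, hcd, hac⟩
      · show (a : ℕ) < (c : ℕ); omega
      · show (c : ℕ) < (b : ℕ); omega
      · show (b : ℕ) < (d : ℕ); omega



open Classical in
/-- For a magic unitary `u` in a unital C*-algebra, a non-crossing partition `π` of
`{1,…,k}` (given as an equivalence relation `R` on `Fin k`), and indices `j`, the sum of
the ordered products `u (i 1) (j 1) ⋯ u (i k) (j k)` over all tuples `i` with `π ≤ ker i`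
equals `1` if `π ≤ ker j` and `0` otherwise. -/
theorem stmt_11 {A : Type*} [NormedRing A] [StarRing A] [CStarRing A]
    [CompleteSpace A] [NormedAlgebra ℂ A] [StarModule ℂ A]
    (n k : ℕ) (hkn : k ≤ n) (u : Fin n → Fin n → A)
    (hproj : ∀ i j, star (u i j) = u i j ∧ u i j * u i j = u i j)
    (hrow : ∀ i, ∑ j, u i j = 1)
    (hcolsum : ∀ j, ∑ i, u i j = 1)
    (R : Fin k → Fin k → Prop) (hR : Equivalence R)
    (hnc : ¬ ∃ s₁ t₁ s₂ t₂ : Fin k, s₁ < t₁ ∧ t₁ < s₂ ∧ s₂ < t₂ ∧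
      R s₁ s₂ ∧ R t₁ t₂ ∧ ¬ R s₁ t₁)
    (j : Fin k → Fin n) :
    ∑ i : Fin k → Fin n,
        (if ∀ s t, R s t → i s = i t
          then (List.ofFn (fun s : Fin k => u (i s) (j s))).prod else 0)
      = if ∀ s t, R s t → j s = j t then 1 else 0 := by
  clear hkn
  have hortho : ∀ (i : Fin n) (a b : Fin n), a ≠ b → u i a * u i b = 0 :=
    fun i a b hab => my_ortho (u i) (fun c => hproj i c) (hrow i) hab
  induction k with
  | zero =>
    have hc : ∀ (f : Fin 0 → Fin n), (∀ s t, R s t → f s = f t) := fun f s => s.elim0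
    rw [if_pos (hc j)]
    have hone : ∀ i : Fin 0 → Fin n,
        (if ∀ s t, R s t → i s = i t
          then (List.ofFn (fun s : Fin 0 => u (i s) (j s))).prod else 0) = 1 := by
      intro i
      rw [if_pos (hc i)]
      simp
    rw [Finset.sum_congr rfl (fun i _ => hone i), Finset.sum_const, Finset.card_univ]
    simp
  | succ k ih =>
    -- split sum helper
    have hsplit : ∀ (p : Fin (k+1)) (F : (Fin (k+1) → Fin n) → A),
        ∑ i, F i = ∑ g : Fin k → Fin n, ∑ x : Fin n, F (p.insertNth (α := fun _ => Fin n) x g) := by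
      intro p F
      rw [← Equiv.sum_comp (Fin.insertNthEquiv (fun _ => Fin n) p) F, Fintype.sum_prod_type]
      rw [Finset.sum_comm]
      rfl
    have hprodeq : ∀ (p : Fin (k+1)) (x : Fin n) (g : Fin k → Fin n),
        (fun s => u (p.insertNth (α := fun _ => Fin n) x g s) (j s))
          = p.insertNth (α := fun _ => A) (u x (j p))
              (fun a => u (g a) (j (p.succAbove a))) := by
      intro p x g
      funext s
      rcases eq_or_ne s p with rfl | hs
      · rw [Fin.insertNth_apply_same, Fin.insertNth_apply_same]
      · obtain ⟨a, rfl⟩ := Fin.exists_succAbove_eq hs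
        rw [Fin.insertNth_apply_succAbove, Fin.insertNth_apply_succAbove]
    rcases my_exists_nice R hR hnc with ⟨p, hp⟩ | ⟨s, q, hsq, hRsq⟩
    · -- singleton block case
      have hR' : Equivalence (fun a b : Fin k => R (p.succAbove a) (p.succAbove b)) :=
        ⟨fun a => hR.refl _, fun h => hR.symm h, fun h h' => hR.trans h h'⟩
      have hnc' : ¬ ∃ s₁ t₁ s₂ t₂ : Fin k, s₁ < t₁ ∧ t₁ < s₂ ∧ s₂ < t₂ ∧
          (fun a b : Fin k => R (p.succAbove a) (p.succAbove b)) s₁ s₂ ∧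
          (fun a b : Fin k => R (p.succAbove a) (p.succAbove b)) t₁ t₂ ∧
          ¬ (fun a b : Fin k => R (p.succAbove a) (p.succAbove b)) s₁ t₁ := by
        rintro ⟨a, b, c, d, h1, h2, h3, r1, r2, nr⟩
        exact hnc ⟨_, _, _, _, Fin.strictMono_succAbove p h1, Fin.strictMono_succAbove p h2,
          Fin.strictMono_succAbove p h3, r1, r2, nr⟩
      have IH := ih (fun a b => R (p.succAbove a) (p.succAbove b)) hR' hnc'
        (fun a => j (p.succAbove a))
      have hgen : ∀ (f : Fin (k+1) → Fin n), (∀ s t, R s t → f s = f t) ↔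
          (∀ a b : Fin k, R (p.succAbove a) (p.succAbove b)
            → f (p.succAbove a) = f (p.succAbove b)) := by
        intro f
        constructor
        · intro h a b hab
          exact h _ _ hab
        · intro h s t hst
          rcases eq_or_ne s p with rfl | hs
          · rw [hp t hst]
          · have ht : t ≠ p := by
              intro h'
              subst h'
              exact hs (hp s (hR.symm hst))
            obtain ⟨a, rfl⟩ := Fin.exists_succAbove_eq hs
            obtain ⟨b, rfl⟩ := Fin.exists_succAbove_eq ht
            exact h a b hst
      rw [hsplit p]
      have hinner : ∀ g : Fin k → Fin n,
          (∑ x : Fin n, if ∀ s t, R s t → p.insertNth (α := fun _ => Fin n) x g s = p.insertNth (α := fun _ => Fin n) x g t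
            then (List.ofFn (fun s : Fin (k+1) => u (p.insertNth (α := fun _ => Fin n) x g s) (j s))).prod else 0)
          = (if ∀ a b : Fin k, R (p.succAbove a) (p.succAbove b) → g a = g b
              then (List.ofFn (fun a : Fin k => u (g a) (j (p.succAbove a)))).prod else 0) := by
        intro g
        have hcondg : ∀ x : Fin n, (∀ s t, R s t → p.insertNth (α := fun _ => Fin n) x g s = p.insertNth (α := fun _ => Fin n) x g t) ↔
            (∀ a b : Fin k, R (p.succAbove a) (p.succAbove b) → g a = g b) := by
          intro x
          rw [hgen (p.insertNth (α := fun _ => Fin n) x g)]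
          simp only [Fin.insertNth_apply_succAbove]
        by_cases hg : ∀ a b : Fin k, R (p.succAbove a) (p.succAbove b) → g a = g b
        · rw [if_pos hg]
          calc ∑ x : Fin n, (if ∀ s t, R s t → p.insertNth (α := fun _ => Fin n) x g s = p.insertNth (α := fun _ => Fin n) x g t
                then (List.ofFn (fun s : Fin (k+1) => u (p.insertNth (α := fun _ => Fin n) x g s) (j s))).prod else 0)
              = ∑ x : Fin n,
                  ((List.ofFn (fun a : Fin k => u (g a) (j (p.succAbove a)))).take p.val).prod *
                  (u x (j p) *
                   ((List.ofFn (fun a : Fin k => u (g a) (j (p.succAbove a)))).drop p.val).prod) := by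
                refine Finset.sum_congr rfl fun x _ => ?_
                rw [if_pos ((hcondg x).mpr hg), hprodeq p x g, my_prod_insertNth]
            _ = ((List.ofFn (fun a : Fin k => u (g a) (j (p.succAbove a)))).take p.val).prod *
                  ((∑ x : Fin n, u x (j p)) *
                   ((List.ofFn (fun a : Fin k => u (g a) (j (p.succAbove a)))).drop p.val).prod) := by
                rw [← Finset.mul_sum, ← Finset.sum_mul]
            _ = (List.ofFn (fun a : Fin k => u (g a) (j (p.succAbove a)))).prod := by
                rw [hcolsum (j p), one_mul, List.prod_take_mul_prod_drop]
        · rw [if_neg hg]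
          exact Finset.sum_eq_zero fun x _ => if_neg (fun h => hg ((hcondg x).mp h))
      rw [Finset.sum_congr rfl (fun g _ => hinner g), IH]
      by_cases hj : ∀ a b : Fin k, R (p.succAbove a) (p.succAbove b)
          → j (p.succAbove a) = j (p.succAbove b)
      · rw [if_pos hj, if_pos ((hgen j).mpr hj)]
      · rw [if_neg hj, if_neg (fun h => hj ((hgen j).mp h))]
    · -- adjacent pair case
      have hqk : (q : ℕ) ≤ k := Nat.lt_succ_iff.mp q.isLt
      have hsk : (s : ℕ) < k := by omega
      have hsnq : s ≠ q := by
        intro h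
        rw [h] at hsq
        omega
      set s' : Fin k := ⟨(s : ℕ), hsk⟩ with hs'def
      have hs' : q.succAbove s' = s := by
        rw [Fin.succAbove_of_castSucc_lt]
        · exact Fin.ext (by simp [hs'def])
        · rw [Fin.lt_def]
          show (s : ℕ) < q; omega
      have hR' : Equivalence (fun a b : Fin k => R (q.succAbove a) (q.succAbove b)) :=
        ⟨fun a => hR.refl _, fun h => hR.symm h, fun h h' => hR.trans h h'⟩
      have hnc' : ¬ ∃ s₁ t₁ s₂ t₂ : Fin k, s₁ < t₁ ∧ t₁ < s₂ ∧ s₂ < t₂ ∧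
          (fun a b : Fin k => R (q.succAbove a) (q.succAbove b)) s₁ s₂ ∧
          (fun a b : Fin k => R (q.succAbove a) (q.succAbove b)) t₁ t₂ ∧
          ¬ (fun a b : Fin k => R (q.succAbove a) (q.succAbove b)) s₁ t₁ := by
        rintro ⟨a, b, c, d, h1, h2, h3, r1, r2, nr⟩
        exact hnc ⟨_, _, _, _, Fin.strictMono_succAbove q h1, Fin.strictMono_succAbove q h2,
          Fin.strictMono_succAbove q h3, r1, r2, nr⟩
      have IH := ih (fun a b => R (q.succAbove a) (q.succAbove b)) hR' hnc'
        (fun a => j (q.succAbove a))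
      have hgen : ∀ (f : Fin (k+1) → Fin n), (∀ s t, R s t → f s = f t) ↔
          ((∀ a b : Fin k, R (q.succAbove a) (q.succAbove b)
            → f (q.succAbove a) = f (q.succAbove b)) ∧ f s = f q) := by
        intro f
        constructor
        · intro h
          exact ⟨fun a b hab => h _ _ hab, h s q hRsq⟩
        · rintro ⟨h, hfs⟩ w z hwz
          by_cases hw : w = q
          · by_cases hz : z = q
            · rw [hw, hz]
            · obtain ⟨z', hz'⟩ := Fin.exists_succAbove_eq hz
              have hsz : R s z := hR.trans hRsq (hw ▸ hwz)
              have h2 := h s' z' (by rw [hs', hz']; exact hsz)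
              rw [hs', hz'] at h2
              rw [hw, ← hfs, h2]
          · by_cases hz : z = q
            · obtain ⟨w', hw'⟩ := Fin.exists_succAbove_eq hw
              have hws : R w s := hR.trans (hz ▸ hwz) (hR.symm hRsq)
              have h2 := h w' s' (by rw [hs', hw']; exact hws)
              rw [hs', hw'] at h2
              rw [hz, ← hfs, h2]
            · obtain ⟨w', hw'⟩ := Fin.exists_succAbove_eq hw
              obtain ⟨z', hz'⟩ := Fin.exists_succAbove_eq hz
              have h2 := h w' z' (by rw [hw', hz']; exact hwz)
              rw [hw', hz'] at h2
              exact h2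
      have hT1 : ∀ g : Fin k → Fin n,
          ((List.ofFn (fun a : Fin k => u (g a) (j (q.succAbove a)))).take q.val).prod
            = ((List.ofFn (fun a : Fin k => u (g a) (j (q.succAbove a)))).take s'.val).prod
              * u (g s') (j s) := by
        intro g
        have hlen : (s' : ℕ) < (List.ofFn (fun a : Fin k => u (g a) (j (q.succAbove a)))).length := by
          simpa using hsk
        have hq' : (q : ℕ) = (s' : ℕ) + 1 := by
          simp only [hs'def]
          omega
        rw [hq', List.prod_take_succ _ _ hlen]
        congr 1
        rw [List.getElem_ofFn]
        show u (g s') (j (q.succAbove s')) = u (g s') (j s)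
        rw [hs']
      rw [hsplit q]
      have hinner : ∀ g : Fin k → Fin n,
          (∑ x : Fin n, if ∀ a b, R a b
              → q.insertNth (α := fun _ => Fin n) x g a = q.insertNth (α := fun _ => Fin n) x g b
            then (List.ofFn (fun t : Fin (k+1) =>
              u (q.insertNth (α := fun _ => Fin n) x g t) (j t))).prod else 0)
          = (if ∀ a b : Fin k, R (q.succAbove a) (q.succAbove b) → g a = g b
              then ((List.ofFn (fun a : Fin k => u (g a) (j (q.succAbove a)))).take q.val).prod
                * (u (g s') (j q)
                  * ((List.ofFn (fun a : Fin k => u (g a) (j (q.succAbove a)))).drop q.val).prod)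
              else 0) := by
        intro g
        have hcondg : ∀ x : Fin n,
            (∀ a b, R a b → q.insertNth (α := fun _ => Fin n) x g a
                = q.insertNth (α := fun _ => Fin n) x g b)
            ↔ ((∀ a b : Fin k, R (q.succAbove a) (q.succAbove b) → g a = g b) ∧ g s' = x) := by
          intro x
          rw [hgen (q.insertNth (α := fun _ => Fin n) x g)]
          have e1 : q.insertNth (α := fun _ => Fin n) x g s = g s' := by
            rw [← hs', Fin.insertNth_apply_succAbove]
          have e2 : q.insertNth (α := fun _ => Fin n) x g q = x :=
            Fin.insertNth_apply_same _ _ _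
          rw [e1, e2]
          simp only [Fin.insertNth_apply_succAbove]
        by_cases hg : ∀ a b : Fin k, R (q.succAbove a) (q.succAbove b) → g a = g b
        · rw [if_pos hg]
          calc (∑ x : Fin n, if ∀ a b, R a b
                  → q.insertNth (α := fun _ => Fin n) x g a
                    = q.insertNth (α := fun _ => Fin n) x g b
                then (List.ofFn (fun t : Fin (k+1) =>
                  u (q.insertNth (α := fun _ => Fin n) x g t) (j t))).prod else 0)
              = ∑ x : Fin n, (if g s' = x then
                  ((List.ofFn (fun a : Fin k => u (g a) (j (q.succAbove a)))).take q.val).prod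
                    * (u x (j q)
                      * ((List.ofFn (fun a : Fin k =>
                          u (g a) (j (q.succAbove a)))).drop q.val).prod) else 0) := by
                refine Finset.sum_congr rfl fun x _ => ?_
                by_cases hx : g s' = x
                · rw [if_pos ((hcondg x).mpr ⟨hg, hx⟩), if_pos hx, hprodeq q x g,
                    my_prod_insertNth]
                · rw [if_neg (fun h => hx ((hcondg x).mp h).2), if_neg hx]
            _ = ((List.ofFn (fun a : Fin k => u (g a) (j (q.succAbove a)))).take q.val).prod
                  * (u (g s') (j q)
                    * ((List.ofFn (fun a : Fin k =>
                        u (g a) (j (q.succAbove a)))).drop q.val).prod) := by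
                rw [Finset.sum_ite_eq]
                simp
        · rw [if_neg hg]
          exact Finset.sum_eq_zero fun x _ => if_neg (fun h => hg ((hcondg x).mp h).1)
      rw [Finset.sum_congr rfl (fun g _ => hinner g)]
      by_cases hjq : j s = j q
      · have hper : ∀ g : Fin k → Fin n,
            ((List.ofFn (fun a : Fin k => u (g a) (j (q.succAbove a)))).take q.val).prod
              * (u (g s') (j q)
                * ((List.ofFn (fun a : Fin k => u (g a) (j (q.succAbove a)))).drop q.val).prod)
            = (List.ofFn (fun a : Fin k => u (g a) (j (q.succAbove a)))).prod := by
          intro g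
          rw [hT1 g, ← hjq, mul_assoc, ← mul_assoc (u (g s') (j s)), (hproj (g s') (j s)).2,
            ← mul_assoc, ← hT1 g]
          · exact List.prod_take_mul_prod_drop _ _
        have hstep : ∀ g : Fin k → Fin n,
            (if ∀ a b : Fin k, R (q.succAbove a) (q.succAbove b) → g a = g b
              then ((List.ofFn (fun a : Fin k => u (g a) (j (q.succAbove a)))).take q.val).prod
                * (u (g s') (j q)
                  * ((List.ofFn (fun a : Fin k =>
                      u (g a) (j (q.succAbove a)))).drop q.val).prod)
              else 0)
            = (if ∀ a b : Fin k, R (q.succAbove a) (q.succAbove b) → g a = g b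
                then (List.ofFn (fun a : Fin k => u (g a) (j (q.succAbove a)))).prod else 0) := by
          intro g
          by_cases hg : ∀ a b : Fin k, R (q.succAbove a) (q.succAbove b) → g a = g b
          · rw [if_pos hg, if_pos hg, hper g]
          · rw [if_neg hg, if_neg hg]
        rw [Finset.sum_congr rfl (fun g _ => hstep g), IH]
        by_cases hj : ∀ a b : Fin k, R (q.succAbove a) (q.succAbove b)
            → j (q.succAbove a) = j (q.succAbove b)
        · rw [if_pos hj, if_pos ((hgen j).mpr ⟨hj, hjq⟩)]
        · rw [if_neg hj, if_neg (fun h => hj ((hgen j).mp h).1)]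
      · have hz : ∀ g : Fin k → Fin n,
            ((List.ofFn (fun a : Fin k => u (g a) (j (q.succAbove a)))).take q.val).prod
              * (u (g s') (j q)
                * ((List.ofFn (fun a : Fin k => u (g a) (j (q.succAbove a)))).drop q.val).prod)
            = 0 := by
          intro g
          rw [hT1 g, mul_assoc, ← mul_assoc (u (g s') (j s)), hortho (g s') (j s) (j q) hjq,
            zero_mul, mul_zero]
        rw [if_neg (fun h => hjq ((hgen j).mp h).2)]
        refine Finset.sum_eq_zero fun g _ => ?_
        by_cases hg : ∀ a b : Fin k, R (q.succAbove a) (q.succAbove b) → g a = g b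
        · rw [if_pos hg, hz g]
        · rw [if_neg hg]
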